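/- Let p(x) = 1 − exp(−x − x²/2 − ((4−2√3)/3)·x³), and let c(θ) = −e^θ ∫_θ^∞ p''(y) e^{−y} dy for θ > 0. Then for all z > 0, ∫_z^∞ c(θ) dθ + c(z) = p'(z), and ∫_0^∞ c(θ) dθ > 0.593. -/

import Mathlib

open MeasureTheory Set Filter Topology

set_option maxHeartbeats 1000000

/-- The multiway semi-OCS probability function. -/
noncomputable def ocsP (x : ℝ) : ℝ :=
  1 - Real.exp (-x - x ^ 2 / 2 - ((4 - 2 * Real.sqrt 3) / 3) * x ^ 3)

/-- The amortization coefficients used in the analysis of Equal-Filling-OCS. -/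
noncomputable def ocsC (θ : ℝ) : ℝ :=
  -(Real.exp θ * ∫ y in Set.Ioi θ, deriv (deriv ocsP) y * Real.exp (-y))

noncomputable def K : ℝ := (4 - 2 * Real.sqrt 3) / 3

lemma hK1 : (17863:ℝ)/100000 ≤ K := by
  have h : Real.sqrt 3 < 1.7320509 := by
    nlinarith [Real.sqrt_nonneg 3, Real.sq_sqrt (by norm_num : (0:ℝ) ≤ 3)]
  unfold K; norm_num at h ⊢; linarith

lemma hK2 : K ≤ (17864:ℝ)/100000 := by
  have h : 1.7320508 < Real.sqrt 3 := by
    nlinarith [Real.sqrt_nonneg 3, Real.sq_sqrt (by norm_num : (0:ℝ) ≤ 3)]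
  unfold K; norm_num at h ⊢; linarith

lemma hK0 : 0 < K := lt_of_lt_of_le (by norm_num) hK1

noncomputable def ee (x : ℝ) : ℝ := -x - x ^ 2 / 2 - K * x ^ 3

lemma ocsP_eq (x : ℝ) : ocsP x = 1 - Real.exp (ee x) := rfl

noncomputable def w (x : ℝ) : ℝ := 1 + x + 3 * K * x ^ 2

noncomputable def psi (x : ℝ) : ℝ := ((1 + 6 * K * x) - (w x) ^ 2) * Real.exp (ee x)

lemma ee_hasDeriv (x : ℝ) : HasDerivAt ee (-1 - x - 3 * K * x ^ 2) x := by
  have h2 : HasDerivAt (fun x : ℝ => x ^ 2) (2 * x) x := by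
    simpa using (hasDerivAt_pow 2 x)
  have h3 : HasDerivAt (fun x : ℝ => x ^ 3) (3 * x ^ 2) x := by
    simpa using (hasDerivAt_pow 3 x)
  have := (((hasDerivAt_id x).neg.sub (h2.div_const 2)).sub (h3.const_mul K))
  refine this.congr_deriv ?_; ring

lemma ocsP_hasDeriv (x : ℝ) : HasDerivAt ocsP (w x * Real.exp (ee x)) x := by
  have h := ((ee_hasDeriv x).exp).const_sub 1
  have he : (fun x => 1 - Real.exp (ee x)) = ocsP := by
    funext y; rw [ocsP_eq]
  rw [he] at h
  refine h.congr_deriv ?_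
  unfold w; ring

lemma deriv_ocsP_eq : deriv ocsP = fun x => w x * Real.exp (ee x) := by
  funext x; exact (ocsP_hasDeriv x).deriv

lemma deriv_ocsP_hasDeriv (x : ℝ) : HasDerivAt (deriv ocsP) (psi x) x := by
  rw [deriv_ocsP_eq]
  have h2 : HasDerivAt (fun x : ℝ => x ^ 2) (2 * x) x := by
    simpa using (hasDerivAt_pow 2 x)
  have hw : HasDerivAt w (1 + 3 * K * (2 * x)) x :=
    ((hasDerivAt_id x).const_add (1:ℝ)).add (h2.const_mul (3*K))
  have := hw.mul ((ee_hasDeriv x).exp)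
  refine this.congr_deriv ?_
  unfold psi w; ring

lemma deriv2_ocsP_eq : deriv (deriv ocsP) = psi := by
  funext x; exact (deriv_ocsP_hasDeriv x).deriv

lemma cont_ee : Continuous ee := by unfold ee; fun_prop
lemma cont_w : Continuous w := by unfold w; fun_prop
lemma cont_psi : Continuous psi := by unfold psi w ee; fun_prop

lemma cont_derivP : Continuous (deriv ocsP) := by
  rw [deriv_ocsP_eq]; exact cont_w.mul (Real.continuous_exp.comp cont_ee)

lemma cont_ocsP : Continuous ocsP := by
  rw [show ocsP = (fun x => 1 - Real.exp (ee x)) from funext fun x => ocsP_eq x]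
  exact continuous_const.sub (Real.continuous_exp.comp cont_ee)

/-- G -/
noncomputable def Gf (y : ℝ) : ℝ := deriv ocsP y * Real.exp (-y)

lemma cont_Gf : Continuous Gf := cont_derivP.mul (by fun_prop)

lemma Gf_eq (y : ℝ) : Gf y = w y * Real.exp (ee y) * Real.exp (-y) := by
  unfold Gf; rw [deriv_ocsP_eq]

lemma exp_quartic {y : ℝ} (hy : 0 ≤ y) :
    1 + y + y^2/2 + y^3/6 + y^4/24 ≤ Real.exp y := by
  have h := Real.sum_le_exp_of_nonneg hy 5
  simp [Finset.sum_range_succ, Nat.factorial] at h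
  linarith

lemma w_nonneg {y : ℝ} (hy : 0 ≤ y) : 0 ≤ w y := by
  unfold w
  nlinarith [mul_nonneg hK0.le (sq_nonneg y)]

lemma w_le {y : ℝ} (hy : 0 ≤ y) : w y ≤ 2 + 3 * y^2 := by
  unfold w
  nlinarith [hK2, sq_nonneg y, sq_nonneg (1-y)]

lemma deriv_ocsP_bound {y : ℝ} (hy : 0 ≤ y) : w y * Real.exp (ee y) ≤ 6 * Real.exp (-y) := by
  have h1 : w y ≤ 6 * Real.exp (y^2/2 + K*y^3) := by
    have h := Real.add_one_le_exp (y^2/2 + K*y^3)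
    have := w_le hy
    nlinarith [mul_nonneg hK0.le (pow_nonneg hy 3)]
  calc w y * Real.exp (ee y) ≤ 6*Real.exp (y^2/2+K*y^3) * Real.exp (ee y) :=
        mul_le_mul_of_nonneg_right h1 (Real.exp_pos _).le
    _ = 6 * Real.exp (-y) := by rw [mul_assoc, ← Real.exp_add]; congr 2; unfold ee; ring

lemma Gf_nonneg {y : ℝ} (hy : 0 ≤ y) : 0 ≤ Gf y := by
  rw [Gf_eq]
  exact mul_nonneg (mul_nonneg (w_nonneg hy) (Real.exp_pos _).le) (Real.exp_pos _).le

lemma Gf_bound {y : ℝ} (hy : 0 ≤ y) : Gf y ≤ 6 * Real.exp (-(2*y)) := by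
  rw [Gf_eq]
  calc w y * Real.exp (ee y) * Real.exp (-y) ≤ 6 * Real.exp (-y) * Real.exp (-y) :=
        mul_le_mul_of_nonneg_right (deriv_ocsP_bound hy) (Real.exp_pos _).le
    _ = 6 * Real.exp (-(2*y)) := by rw [mul_assoc, ← Real.exp_add]; congr 2; ring

lemma psi_bound {y : ℝ} (hy : 0 ≤ y) : |psi y * Real.exp (-y)| ≤ 240 * Real.exp (-y) := by
  have hv : (0:ℝ) ≤ y^2/2 + K*y^3 := by
    have := mul_nonneg hK0.le (pow_nonneg hy 3); nlinarith [sq_nonneg y]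
  have hmono : Real.exp y ≤ Real.exp (y + (y^2/2 + K*y^3)) := by
    apply Real.exp_le_exp.mpr; linarith
  have habs : |(1 + 6 * K * y) - (w y)^2| ≤ 240 * Real.exp (y + (y^2/2 + K*y^3)) := by
    have hwle := w_le hy
    have hwnn := w_nonneg hy
    have hq := exp_quartic hy
    have hKy := mul_nonneg hK0.le hy
    apply abs_le.mpr
    constructor
    · nlinarith [sq_nonneg (w y), hK2]
    · nlinarith [sq_nonneg (w y), hK2, sq_nonneg y, sq_nonneg (y^2)]
  calc |psi y * Real.exp (-y)|
      = |(1 + 6 * K * y) - (w y)^2| * (Real.exp (ee y) * Real.exp (-y)) := by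
        unfold psi
        rw [abs_mul, abs_mul, abs_of_pos (Real.exp_pos _), abs_of_pos (Real.exp_pos _), mul_assoc]
    _ ≤ 240 * Real.exp (y + (y^2/2 + K*y^3)) * (Real.exp (ee y) * Real.exp (-y)) :=
        mul_le_mul_of_nonneg_right habs (by positivity)
    _ = 240 * Real.exp (-y) := by
        rw [mul_assoc, ← Real.exp_add, ← Real.exp_add]; congr 2; unfold ee; ring

/- integrability of basic exponentials -/
lemma int_exp1 (z : ℝ) : IntegrableOn (fun y => Real.exp (-y)) (Ioi z) := by
  have h := exp_neg_integrableOn_Ioi z (b := 1) (by norm_num)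
  have he : (fun y : ℝ => Real.exp (-1*y)) = fun y => Real.exp (-y) :=
    funext fun y => by norm_num
  rwa [he] at h

lemma int_exp2 (z : ℝ) : IntegrableOn (fun y => Real.exp (-(2*y))) (Ioi z) := by
  have h := exp_neg_integrableOn_Ioi z (b := 2) (by norm_num)
  have he : (fun y : ℝ => Real.exp (-2*y)) = fun y => Real.exp (-(2*y)) :=
    funext fun y => by norm_num
  rwa [he] at h

lemma intGf {z : ℝ} (hz : 0 ≤ z) : IntegrableOn Gf (Ioi z) := by
  apply Integrable.mono' ((int_exp2 z).const_mul 6) (cont_Gf.aestronglyMeasurable.restrict)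
  refine (ae_restrict_iff' measurableSet_Ioi).mpr (ae_of_all _ fun y hy => ?_)
  have hy0 : 0 ≤ y := le_trans hz (le_of_lt hy)
  rw [Real.norm_eq_abs, abs_of_nonneg (Gf_nonneg hy0)]
  exact Gf_bound hy0

lemma intPsi {z : ℝ} (hz : 0 ≤ z) : IntegrableOn (fun y => psi y * Real.exp (-y)) (Ioi z) := by
  apply Integrable.mono' ((int_exp1 z).const_mul 240)
    ((cont_psi.mul (by fun_prop)).aestronglyMeasurable.restrict)
  refine (ae_restrict_iff' measurableSet_Ioi).mpr (ae_of_all _ fun y hy => ?_)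
  have hy0 : 0 ≤ y := le_trans hz (le_of_lt hy)
  rw [Real.norm_eq_abs]
  exact psi_bound hy0

lemma tendsto_exp2 : Tendsto (fun y : ℝ => 6 * Real.exp (-(2*y))) atTop (𝓝 0) := by
  have h : Tendsto (fun y : ℝ => 2 * y) atTop atTop :=
    Tendsto.const_mul_atTop (by norm_num) tendsto_id
  have := (Real.tendsto_exp_neg_atTop_nhds_zero.comp h).const_mul 6
  simpa using this

lemma tendsto_Gf : Tendsto Gf atTop (𝓝 0) := by
  apply tendsto_of_tendsto_of_tendsto_of_le_of_le' tendsto_const_nhds tendsto_exp2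
  · filter_upwards [eventually_ge_atTop (0:ℝ)] with y hy using Gf_nonneg hy
  · filter_upwards [eventually_ge_atTop (0:ℝ)] with y hy using Gf_bound hy

/-- Step A -/
lemma stepA {z : ℝ} (hz : 0 ≤ z) :
    (∫ y in Ioi z, psi y * Real.exp (-y)) = (∫ y in Ioi z, Gf y) - Gf z := by
  have hderiv : ∀ y ∈ Ioi z, HasDerivAt Gf (psi y * Real.exp (-y) - Gf y) y := by
    intro y _
    have h1 : HasDerivAt (fun t : ℝ => Real.exp (-t)) (Real.exp (-y) * (-1)) y :=
      ((hasDerivAt_id y).neg).exp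
    have := (deriv_ocsP_hasDeriv y).mul h1
    unfold Gf
    refine this.congr_deriv ?_
    ring
  have hint : IntegrableOn (fun y => psi y * Real.exp (-y) - Gf y) (Ioi z) :=
    (intPsi hz).sub (intGf hz)
  have h := integral_Ioi_of_hasDerivAt_of_tendsto
    (cont_Gf.continuousWithinAt) hderiv hint tendsto_Gf
  rw [integral_sub (intPsi hz) (intGf hz)] at h
  linarith

noncomputable def Ff (z : ℝ) : ℝ := Real.exp z * ∫ y in Ioi z, Gf y

/-- c(z) = p'(z) - F(z) for z ≥ 0 -/
lemma ocsC_eq {z : ℝ} (hz : 0 ≤ z) : ocsC z = deriv ocsP z - Ff z := by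
  unfold ocsC
  rw [deriv2_ocsP_eq]
  have : (∫ y in Ioi z, psi y * Real.exp (-y)) = (∫ y in Ioi z, Gf y) - Gf z := stepA hz
  rw [this]
  unfold Ff Gf
  have he : Real.exp z * Real.exp (-z) = 1 := by
    rw [← Real.exp_add]; simp
  rw [mul_sub]
  rw [show Real.exp z * (deriv ocsP z * Real.exp (-z)) = deriv ocsP z by
    rw [mul_comm (deriv ocsP z), ← mul_assoc, he, one_mul]]
  ring

/-- primitive of Gf -/
noncomputable def P0 (x : ℝ) : ℝ := ∫ y in (0:ℝ)..x, Gf y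

lemma P0_hasDeriv (x : ℝ) : HasDerivAt P0 (Gf x) x :=
  intervalIntegral.integral_hasDerivAt_right (cont_Gf.intervalIntegrable 0 x)
    (cont_Gf.aestronglyMeasurable.stronglyMeasurableAtFilter)
    cont_Gf.continuousAt

lemma P0_cont : Continuous P0 :=
  continuous_iff_continuousAt.mpr fun x => (P0_hasDeriv x).continuousAt

lemma H_eq {x : ℝ} (hx : 0 ≤ x) :
    (∫ y in Ioi x, Gf y) = (∫ y in Ioi (0:ℝ), Gf y) - P0 x := by
  have hsplit : (∫ y in Ioi (0:ℝ), Gf y)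
      = (∫ y in Ioc (0:ℝ) x, Gf y) + ∫ y in Ioi x, Gf y := by
    rw [← setIntegral_union (Ioc_disjoint_Ioi le_rfl) measurableSet_Ioi
      ((intGf le_rfl).mono_set Ioc_subset_Ioi_self) (intGf hx),
      Ioc_union_Ioi_eq_Ioi hx]
  unfold P0
  rw [intervalIntegral.integral_of_le hx]
  linarith

lemma Ff_hasDeriv {z : ℝ} (hz : 0 < z) : HasDerivAt Ff (Ff z - deriv ocsP z) z := by
  have heq : (fun x => (∫ y in Ioi (0:ℝ), Gf y) - P0 x) =ᶠ[nhds z] fun x => ∫ y in Ioi x, Gf y := by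
    filter_upwards [isOpen_Ioi.mem_nhds hz] with x hx
    exact (H_eq (le_of_lt hx)).symm
  have hH : HasDerivAt (fun x => ∫ y in Ioi x, Gf y) (-(Gf z)) z := by
    have := ((P0_hasDeriv z).const_sub (∫ y in Ioi (0:ℝ), Gf y))
    exact this.congr_of_eventuallyEq heq.symm
  have := (Real.hasDerivAt_exp z).mul hH
  unfold Ff
  refine this.congr_deriv ?_
  have hGz : Real.exp z * Gf z = deriv ocsP z := by
    unfold Gf; rw [← mul_assoc, mul_comm (Real.exp z), mul_assoc, ← Real.exp_add]; simp
  rw [← hGz]; ring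

lemma Ff_contOn : ContinuousOn Ff (Ici 0) := by
  have hc : Continuous fun x => Real.exp x * ((∫ y in Ioi (0:ℝ), Gf y) - P0 x) := by
    exact Real.continuous_exp.mul (continuous_const.sub P0_cont)
  apply hc.continuousOn.congr
  intro x hx
  unfold Ff
  rw [H_eq hx]

lemma int_exp2_eval (z : ℝ) : (∫ y in Ioi z, Real.exp (-(2*y))) = Real.exp (-(2*z))/2 := by
  have hderiv : ∀ y ∈ Ioi z, HasDerivAt (fun t => -Real.exp (-(2*t))/2) (Real.exp (-(2*y))) y := by
    intro y _
    have h1 : HasDerivAt (fun t : ℝ => -(2*t)) (-2) y := by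
      have h := ((hasDerivAt_id y).const_mul 2).neg
      simp at h
      exact h
    have := (h1.exp.neg).div_const 2
    refine this.congr_deriv ?_
    ring
  have hcont : ContinuousWithinAt (fun t => -Real.exp (-(2*t))/2) (Ici z) z :=
    (((by fun_prop : Continuous fun t : ℝ => Real.exp (-(2*t))).neg).div_const 2).continuousWithinAt
  have htend : Tendsto (fun t => -Real.exp (-(2*t))/2) atTop (𝓝 0) := by
    have h2 := tendsto_exp2.const_mul (-(1/12) : ℝ)
    simp only [mul_zero] at h2
    exact h2.congr (fun t => by ring)
  have := integral_Ioi_of_hasDerivAt_of_tendsto hcont hderiv (int_exp2 z) htend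
  rw [this]; ring

lemma Ff_nonneg {z : ℝ} (hz : 0 ≤ z) : 0 ≤ Ff z := by
  unfold Ff
  apply mul_nonneg (Real.exp_pos _).le
  apply setIntegral_nonneg measurableSet_Ioi
  intro y hy
  exact Gf_nonneg (le_trans hz (le_of_lt hy))

lemma Ff_bound {z : ℝ} (hz : 0 ≤ z) : Ff z ≤ 3 * Real.exp (-z) := by
  unfold Ff
  have h1 : (∫ y in Ioi z, Gf y) ≤ ∫ y in Ioi z, 6 * Real.exp (-(2*y)) := by
    apply setIntegral_mono_on (intGf hz) ((int_exp2 z).const_mul 6) measurableSet_Ioi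
    intro y hy
    exact Gf_bound (le_trans hz (le_of_lt hy))
  have h2 : (∫ y in Ioi z, 6 * Real.exp (-(2*y))) = 3 * Real.exp (-(2*z)) := by
    rw [MeasureTheory.integral_const_mul, int_exp2_eval]; ring
  calc Real.exp z * ∫ y in Ioi z, Gf y ≤ Real.exp z * (3 * Real.exp (-(2*z))) := by
        apply mul_le_mul_of_nonneg_left _ (Real.exp_pos _).le
        rw [← h2]; exact h1
    _ = 3 * Real.exp (-z) := by
        rw [show Real.exp z * (3 * Real.exp (-(2*z))) = 3 * (Real.exp z * Real.exp (-(2*z))) by ring,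
          ← Real.exp_add]
        congr 2; ring

lemma tendsto_Ff : Tendsto Ff atTop (𝓝 0) := by
  have h3 : Tendsto (fun z : ℝ => 3 * Real.exp (-z)) atTop (𝓝 0) := by
    simpa using Real.tendsto_exp_neg_atTop_nhds_zero.const_mul 3
  apply tendsto_of_tendsto_of_tendsto_of_le_of_le' tendsto_const_nhds h3
  · filter_upwards [eventually_ge_atTop (0:ℝ)] with z hz using Ff_nonneg hz
  · filter_upwards [eventually_ge_atTop (0:ℝ)] with z hz using Ff_bound hz

lemma cont_Ff_within {z : ℝ} (hz : 0 ≤ z) : ContinuousWithinAt Ff (Ici z) z :=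
  (Ff_contOn z (mem_Ici.mpr hz)).mono (Ici_subset_Ici.mpr hz)

lemma derivP_nonneg {y : ℝ} (hy : 0 ≤ y) : 0 ≤ deriv ocsP y := by
  rw [deriv_ocsP_eq]
  exact mul_nonneg (w_nonneg hy) (Real.exp_pos _).le

lemma derivP_le {y : ℝ} (hy : 0 ≤ y) : deriv ocsP y ≤ 6 * Real.exp (-y) := by
  rw [deriv_ocsP_eq]; exact deriv_ocsP_bound hy

lemma int_c {z : ℝ} (hz : 0 ≤ z) :
    IntegrableOn (fun θ => Ff θ - deriv ocsP θ) (Ioi z) := by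
  have hFm : AEStronglyMeasurable Ff (volume.restrict (Ioi z)) := by
    apply ContinuousOn.aestronglyMeasurable _ measurableSet_Ioi
    exact Ff_contOn.mono (fun x hx => le_trans hz (le_of_lt hx))
  apply Integrable.mono' ((int_exp1 z).const_mul 9)
    (hFm.sub cont_derivP.aestronglyMeasurable.restrict)
  refine (ae_restrict_iff' measurableSet_Ioi).mpr (ae_of_all _ fun θ hθ => ?_)
  have hθ0 : 0 ≤ θ := le_trans hz (le_of_lt hθ)
  have h1 := Ff_nonneg hθ0
  have h2 := Ff_bound hθ0
  have h3 := derivP_nonneg hθ0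
  have h4 := derivP_le hθ0
  simp only [Pi.sub_apply]
  rw [Real.norm_eq_abs, abs_le]
  constructor <;> nlinarith [Real.exp_pos (-θ)]

lemma stepD {z : ℝ} (hz : 0 ≤ z) : (∫ θ in Ioi z, ocsC θ) = Ff z := by
  rw [setIntegral_congr_fun measurableSet_Ioi
    (fun θ (hθ : θ ∈ Ioi z) => ocsC_eq (le_trans hz (le_of_lt hθ)))]
  have h := integral_Ioi_of_hasDerivAt_of_tendsto (cont_Ff_within hz)
    (fun θ hθ => Ff_hasDeriv (lt_of_le_of_lt hz hθ)) (int_c hz) tendsto_Ff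
  have h2 : (∫ θ in Ioi z, (deriv ocsP θ - Ff θ))
      = -∫ θ in Ioi z, (Ff θ - deriv ocsP θ) := by
    rw [← MeasureTheory.integral_neg]
    apply setIntegral_congr_fun measurableSet_Ioi
    intro θ _
    simp only [Pi.neg_apply]
    ring
  rw [h2, h]
  ring

lemma ocsP_zero : ocsP 0 = 0 := by
  rw [ocsP_eq]
  have : ee 0 = 0 := by unfold ee; norm_num
  rw [this, Real.exp_zero]; ring

lemma ocsP_mem {y : ℝ} (hy : 0 ≤ y) : 0 ≤ ocsP y ∧ ocsP y ≤ 1 := by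
  rw [ocsP_eq]
  have h1 : ee y ≤ 0 := by
    unfold ee
    nlinarith [sq_nonneg y, mul_nonneg hK0.le (pow_nonneg hy 3)]
  have h2 : Real.exp (ee y) ≤ 1 := Real.exp_le_one_iff.mpr h1
  have h3 := Real.exp_pos (ee y)
  constructor <;> linarith

noncomputable def Jv : ℝ := ∫ y in Ioi (0:ℝ), Real.exp (-(2*y + y^2/2 + K*y^3))

lemma intPhi : IntegrableOn (fun y => Real.exp (-(2*y + y^2/2 + K*y^3))) (Ioi (0:ℝ)) := by
  apply Integrable.mono' (int_exp2 0) ((by fun_prop : Continuous fun y : ℝ =>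
    Real.exp (-(2*y + y^2/2 + K*y^3))).aestronglyMeasurable.restrict)
  refine (ae_restrict_iff' measurableSet_Ioi).mpr (ae_of_all _ fun y hy => ?_)
  have hy0 : 0 ≤ y := le_of_lt hy
  rw [Real.norm_eq_abs, abs_of_pos (Real.exp_pos _)]
  apply Real.exp_le_exp.mpr
  nlinarith [sq_nonneg y, mul_nonneg hK0.le (pow_nonneg hy0 3)]

lemma intPocs : IntegrableOn (fun y => ocsP y * Real.exp (-y)) (Ioi (0:ℝ)) := by
  have hc : Continuous fun y => ocsP y * Real.exp (-y) :=
    cont_ocsP.mul (by fun_prop)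
  apply Integrable.mono' (int_exp1 0) (hc.aestronglyMeasurable.restrict)
  refine (ae_restrict_iff' measurableSet_Ioi).mpr (ae_of_all _ fun y hy => ?_)
  have hy0 : 0 ≤ y := le_of_lt hy
  obtain ⟨h1, h2⟩ := ocsP_mem hy0
  rw [Real.norm_eq_abs, abs_of_nonneg (mul_nonneg h1 (Real.exp_pos _).le)]
  nlinarith [Real.exp_pos (-y)]

lemma stepE : (∫ y in Ioi (0:ℝ), Gf y) = 1 - Jv := by
  have hderiv : ∀ y ∈ Ioi (0:ℝ), HasDerivAt (fun y => ocsP y * Real.exp (-y))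
      (Gf y - ocsP y * Real.exp (-y)) y := by
    intro y _
    have h1 : HasDerivAt (fun t : ℝ => Real.exp (-t)) (Real.exp (-y) * (-1)) y :=
      ((hasDerivAt_id y).neg).exp
    have := (ocsP_hasDeriv y).mul h1
    refine this.congr_deriv ?_
    rw [Gf_eq]
    ring
  have hcont : ContinuousWithinAt (fun y => ocsP y * Real.exp (-y)) (Ici (0:ℝ)) 0 :=
    (cont_ocsP.mul (by fun_prop)).continuousWithinAt
  have htend : Tendsto (fun y => ocsP y * Real.exp (-y)) atTop (𝓝 0) := by
    apply tendsto_of_tendsto_of_tendsto_of_le_of_le' tendsto_const_nhds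
      Real.tendsto_exp_neg_atTop_nhds_zero
    · filter_upwards [eventually_ge_atTop (0:ℝ)] with y hy
      exact mul_nonneg (ocsP_mem hy).1 (Real.exp_pos _).le
    · filter_upwards [eventually_ge_atTop (0:ℝ)] with y hy
      have := (ocsP_mem hy).2
      have he := Real.exp_pos (-y)
      nlinarith
  have h := integral_Ioi_of_hasDerivAt_of_tendsto hcont hderiv
    ((intGf le_rfl).sub intPocs) htend
  rw [integral_sub (intGf le_rfl) intPocs, ocsP_zero] at h
  have h2 : (∫ y in Ioi (0:ℝ), ocsP y * Real.exp (-y))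
      = (∫ y in Ioi (0:ℝ), (Real.exp (-y) - Real.exp (-(2*y + y^2/2 + K*y^3)))) := by
    apply setIntegral_congr_fun measurableSet_Ioi
    intro y _
    show ocsP y * Real.exp (-y) = _
    rw [ocsP_eq]
    rw [sub_mul, one_mul, ← Real.exp_add]
    congr 2
    unfold ee; ring
  rw [h2, integral_sub (int_exp1 0) intPhi, integral_exp_neg_Ioi_zero] at h
  unfold Jv
  linarith

lemma exp_neg_upper (q : ℝ) (k : ℕ) (r : ℝ) (hq : q = k + r) (h0 : 0 ≤ r) (h1 : r ≤ 1) :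
    Real.exp (-q) ≤ (0.3678794412:ℝ)^k *
      (1 - r + r^2/2 - r^3/6 + r^4/24 - r^5/120 + r^6/720 - r^7/5040 + r^8/40320
        - r^9/362880 + r^10*(11/36288000)) := by
  have hek : Real.exp (-(1:ℝ)) ≤ 0.3678794412 := by
    have hmul : Real.exp (-(1:ℝ)) * Real.exp 1 = 1 := by
      rw [← Real.exp_add]; norm_num
    nlinarith [hmul, Real.exp_one_gt_d9, Real.exp_pos (-(1:ℝ))]
  have her : Real.exp (-r) ≤ 1 - r + r^2/2 - r^3/6 + r^4/24 - r^5/120 + r^6/720 - r^7/5040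
      + r^8/40320 - r^9/362880 + r^10*(11/36288000) := by
    have hb := Real.exp_bound (x := -r) (by rw [abs_neg, abs_of_nonneg h0]; exact h1)
      (n := 10) (by norm_num)
    rw [abs_neg, abs_of_nonneg h0] at hb
    have hsum : (∑ i ∈ Finset.range 10, (-r) ^ i / (Nat.factorial i : ℝ))
        = 1 - r + r^2/2 - r^3/6 + r^4/24 - r^5/120 + r^6/720 - r^7/5040
          + r^8/40320 - r^9/362880 := by
      simp [Finset.sum_range_succ, Nat.factorial]
      try ring
    rw [hsum] at hb
    norm_num [Nat.factorial] at hb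
    have h2 := (abs_le.mp hb).2
    nlinarith [pow_nonneg h0 10]
  have hsplit : Real.exp (-q) = Real.exp (-(1:ℝ))^k * Real.exp (-r) := by
    rw [← Real.exp_nat_mul, ← Real.exp_add]
    congr 1
    rw [hq]; push_cast; ring
  rw [hsplit]
  exact mul_le_mul (pow_le_pow_left₀ (Real.exp_pos _).le hek k) her (Real.exp_pos _).le
    (by positivity)

lemma sinh_poly {t : ℝ} (h0 : 0 ≤ t) (h1 : t ≤ 1) :
    Real.exp t - Real.exp (-t) ≤ 2*(t + t^3/6 + t^5/120 + t^7/5040) + t^8/17000 := by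
  have hb1 := Real.exp_bound (x := t) (by rwa [abs_of_nonneg h0]) (n := 8) (by norm_num)
  have hb2 := Real.exp_bound (x := -t) (by rw [abs_neg, abs_of_nonneg h0]; exact h1)
    (n := 8) (by norm_num)
  rw [abs_of_nonneg h0] at hb1
  rw [abs_neg, abs_of_nonneg h0] at hb2
  have hs1 : (∑ i ∈ Finset.range 8, t ^ i / (Nat.factorial i : ℝ))
      = 1 + t + t^2/2 + t^3/6 + t^4/24 + t^5/120 + t^6/720 + t^7/5040 := by
    simp [Finset.sum_range_succ, Nat.factorial]
    try ring
  have hs2 : (∑ i ∈ Finset.range 8, (-t) ^ i / (Nat.factorial i : ℝ))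
      = 1 - t + t^2/2 - t^3/6 + t^4/24 - t^5/120 + t^6/720 - t^7/5040 := by
    simp [Finset.sum_range_succ, Nat.factorial]
    try ring
  rw [hs1] at hb1; rw [hs2] at hb2
  norm_num [Nat.factorial] at hb1 hb2
  have e1 := (abs_le.mp hb1).2
  have e2 := (abs_le.mp hb2).1
  nlinarith [pow_nonneg h0 8]

lemma expdiff_mono {s t : ℝ} (h : s ≤ t) :
    Real.exp s - Real.exp (-s) ≤ Real.exp t - Real.exp (-t) := by
  have h1 := Real.exp_le_exp.mpr h
  have h2 := Real.exp_le_exp.mpr (neg_le_neg h)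
  linarith

lemma piece (a b m U V glo B : ℝ) (ha : 0 ≤ a) (hab : a < b) (hm : m = (a+b)/2)
    (hU : Real.exp (-(2*m + m^2/2 + K*m^3)) ≤ U)
    (hV : Real.exp ((2 + m + 3*K*m^2)*(b-a)/2) - Real.exp (-((2 + m + 3*K*m^2)*(b-a)/2)) ≤ V)
    (hglo : glo ≤ 2 + m + 3*K*m^2) (hglo0 : 0 < glo)
    (hB : U * V / glo ≤ B) :
    (∫ y in a..b, Real.exp (-(2*y + y^2/2 + K*y^3))) ≤ B := by
  set γ := 2 + m + 3*K*m^2 with hγ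
  have hγ0 : 0 < γ := lt_of_lt_of_le hglo0 hglo
  have hmono : (∫ y in a..b, Real.exp (-(2*y + y^2/2 + K*y^3)))
      ≤ ∫ y in a..b, Real.exp (-(2*m + m^2/2 + K*m^3) - γ*(y - m)) := by
    apply intervalIntegral.integral_mono_on hab.le
      ((by fun_prop : Continuous fun y : ℝ =>
        Real.exp (-(2*y + y^2/2 + K*y^3))).intervalIntegrable a b)
      ((by fun_prop : Continuous fun y : ℝ =>
        Real.exp (-(2*m + m^2/2 + K*m^3) - γ*(y - m))).intervalIntegrable a b)
    intro y hy
    apply Real.exp_le_exp.mpr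
    have hy0 : 0 ≤ y := le_trans ha hy.1
    have hm0 : 0 ≤ m := by rw [hm]; linarith [hy.1]
    have hid : (2*y + y^2/2 + K*y^3) - ((2*m + m^2/2 + K*m^3) + γ*(y-m))
        = (y-m)^2 * (1/2) + K * (y + 2*m) * (y-m)^2 := by rw [hγ]; ring
    nlinarith [sq_nonneg (y-m),
      mul_nonneg (mul_nonneg hK0.le (by linarith : (0:ℝ) ≤ y + 2*m)) (sq_nonneg (y-m))]
  have hftc : (∫ y in a..b, Real.exp (-(2*m + m^2/2 + K*m^3) - γ*(y - m)))
      = (Real.exp (-(2*m + m^2/2 + K*m^3) - γ*(a - m))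
        - Real.exp (-(2*m + m^2/2 + K*m^3) - γ*(b - m))) / γ := by
    have hd : ∀ y ∈ uIcc a b, HasDerivAt
        (fun t => -Real.exp (-(2*m + m^2/2 + K*m^3) - γ*(t - m)) / γ)
        (Real.exp (-(2*m + m^2/2 + K*m^3) - γ*(y - m))) y := by
      intro y _
      have hinner : HasDerivAt (fun t : ℝ => -(2*m + m^2/2 + K*m^3) - γ*(t - m)) (-γ) y := by
        have h0 := (((hasDerivAt_id y).sub_const m).const_mul γ).const_sub
          (-(2*m + m^2/2 + K*m^3))
        refine h0.congr_deriv ?_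
        ring
      have h1 := (hinner.exp.neg).div_const γ
      refine h1.congr_deriv ?_
      field_simp
    rw [intervalIntegral.integral_eq_sub_of_hasDerivAt hd
      ((by fun_prop : Continuous fun y : ℝ =>
        Real.exp (-(2*m + m^2/2 + K*m^3) - γ*(y - m))).intervalIntegrable a b)]
    field_simp
    ring
  have hae : -(2*m + m^2/2 + K*m^3) - γ*(a - m) = -(2*m + m^2/2 + K*m^3) + γ*(b-a)/2 := by
    rw [hm]; ring
  have hbe : -(2*m + m^2/2 + K*m^3) - γ*(b - m) = -(2*m + m^2/2 + K*m^3) + -(γ*(b-a)/2) := by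
    rw [hm]; ring
  rw [hae, hbe, Real.exp_add, Real.exp_add] at hftc
  refine hmono.trans ?_
  rw [hftc]
  have heq : (Real.exp (-(2*m+m^2/2+K*m^3)) * Real.exp (γ*(b-a)/2)
      - Real.exp (-(2*m+m^2/2+K*m^3)) * Real.exp (-(γ*(b-a)/2)))/γ
      = Real.exp (-(2*m+m^2/2+K*m^3)) * (Real.exp (γ*(b-a)/2) - Real.exp (-(γ*(b-a)/2)))/γ := by
    ring
  rw [heq]
  refine le_trans ?_ hB
  have hVD : 0 ≤ Real.exp (γ*(b-a)/2) - Real.exp (-(γ*(b-a)/2)) := by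
    have hba : -(γ*(b-a)/2) ≤ γ*(b-a)/2 := by nlinarith
    linarith [Real.exp_le_exp.mpr hba]
  have hU0 : (0:ℝ) ≤ U := le_trans (Real.exp_pos _).le hU
  have hUV0 : 0 ≤ U * V := mul_nonneg hU0 (le_trans hVD hV)
  exact div_le_div₀ hUV0 (mul_le_mul hU hV hVD hU0) hglo0 hglo

lemma tail_bound : (∫ y in Ioi (25/10:ℝ), Real.exp (-(2*y + y^2/2 + K*y^3))) ≤ 1/100000 := by
  have hint : IntegrableOn (fun y => Real.exp (-(2*y + y^2/2 + K*y^3))) (Ioi (25/10:ℝ)) :=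
    intPhi.mono_set (Ioi_subset_Ioi (by norm_num))
  have hint2 : IntegrableOn
      (fun y => Real.exp (-(109/10:ℝ)) * (Real.exp (5:ℝ) * Real.exp (-(2*y)))) (Ioi (25/10:ℝ)) :=
    ((int_exp2 (25/10)).const_mul _).const_mul _
  have hmono : (∫ y in Ioi (25/10:ℝ), Real.exp (-(2*y + y^2/2 + K*y^3)))
      ≤ ∫ y in Ioi (25/10:ℝ), Real.exp (-(109/10:ℝ)) * (Real.exp (5:ℝ) * Real.exp (-(2*y))) := by
    apply setIntegral_mono_on hint hint2 measurableSet_Ioi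
    intro y hy
    rw [← Real.exp_add, ← Real.exp_add]
    apply Real.exp_le_exp.mpr
    have hy' : (25/10:ℝ) ≤ y := le_of_lt hy
    have h3 : (125/8:ℝ) ≤ y^3 := by nlinarith [sq_nonneg (y - 5/2), sq_nonneg (y + 5/2), sq_nonneg y]
    have h2 : (625/100:ℝ) ≤ y^2 := by nlinarith
    have hKy : (279109375/100000000:ℝ) ≤ K * y^3 := by nlinarith [hK1, hK0.le, h3]
    linarith
  have heval : (∫ y in Ioi (25/10:ℝ), Real.exp (-(109/10:ℝ)) * (Real.exp (5:ℝ) * Real.exp (-(2*y))))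
      = Real.exp (-(109/10:ℝ)) * (Real.exp (5:ℝ) * (Real.exp (-(2*(25/10:ℝ)))/2)) := by
    rw [MeasureTheory.integral_const_mul, MeasureTheory.integral_const_mul, int_exp2_eval]
  refine hmono.trans ?_
  rw [heval]
  have hcollapse : Real.exp (5:ℝ) * (Real.exp (-(2*(25/10:ℝ)))/2) = 1/2 := by
    rw [show Real.exp (5:ℝ) * (Real.exp (-(2*(25/10:ℝ)))/2)
      = (Real.exp (5:ℝ) * Real.exp (-(2*(25/10:ℝ))))/2 from by ring, ← Real.exp_add]
    norm_num
  rw [hcollapse]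
  have h2 : Real.exp (-(109/10:ℝ)) ≤ 0.00002 :=
    (exp_neg_upper (109/10) 10 (9/10) (by norm_num) (by norm_num) (by norm_num)).trans (by norm_num)
  linarith

lemma ocs_hii : ∀ u v : ℝ, IntervalIntegrable
    (fun y => Real.exp (-(2*y + y^2/2 + K*y^3))) volume u v :=
  fun u v => ((by fun_prop : Continuous fun y : ℝ =>
    Real.exp (-(2*y + y^2/2 + K*y^3)))).intervalIntegrable u v

lemma ocs_p0 : (∫ y in (0:ℝ)..(1/10:ℝ), Real.exp (-(2*y + y^2/2 + K*y^3))) ≤ (9052722286571/100000000000000 : ℝ) := by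
  apply piece _ _ (1/20 : ℝ) (9036868994491/10000000000000 : ℝ) (1027469185243/5000000000000 : ℝ) (82053589/40000000 : ℝ) _ (by norm_num) (by norm_num) (by norm_num)
  · refine (Real.exp_le_exp.mpr (neg_le_neg ?_)).trans
      ((exp_neg_upper (81017863/800000000 : ℝ) 0 (81017863/800000000 : ℝ) (by norm_num) (by norm_num) (by norm_num)).trans (by norm_num))
    norm_num
    linarith [hK1]
  · refine (expdiff_mono (by norm_num; linarith [hK2])).trans
      ((sinh_poly (t := (10256699/100000000 : ℝ)) (by norm_num) (by norm_num)).trans (by norm_num))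
  · norm_num
    linarith [hK1]
  · norm_num
  · norm_num

lemma ocs_p1 : (∫ y in (1/10:ℝ)..(2/10:ℝ), Real.exp (-(2*y + y^2/2 + K*y^3))) ≤ (7335161853937/100000000000000 : ℝ) := by
  apply piece _ _ (3/20 : ℝ) (915111535023/1250000000000 : ℝ) (216627171613/1000000000000 : ℝ) (86482301/40000000 : ℝ) _ (by norm_num) (by norm_num) (by norm_num)
  · refine (Real.exp_le_exp.mpr (neg_le_neg ?_)).trans
      ((exp_neg_upper (249482301/800000000 : ℝ) 0 (249482301/800000000 : ℝ) (by norm_num) (by norm_num) (by norm_num)).trans (by norm_num))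
    norm_num
    linarith [hK1]
  · refine (expdiff_mono (by norm_num; linarith [hK2])).trans
      ((sinh_poly (t := (10810291/100000000 : ℝ)) (by norm_num) (by norm_num)).trans (by norm_num))
  · norm_num
    linarith [hK1]
  · norm_num
  · norm_num

lemma ocs_p2 : (∫ y in (2/10:ℝ)..(3/10:ℝ), Real.exp (-(2*y + y^2/2 + K*y^3))) ≤ (2937530734501/50000000000000 : ℝ) := by
  apply piece _ _ (1/4 : ℝ) (5862311615117/10000000000000 : ℝ) (2288459460057/10000000000000 : ℝ) (3653589/1600000 : ℝ) _ (by norm_num) (by norm_num) (by norm_num)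
  · refine (Real.exp_le_exp.mpr (neg_le_neg ?_)).trans
      ((exp_neg_upper (3417863/6400000 : ℝ) 0 (3417863/6400000 : ℝ) (by norm_num) (by norm_num) (by norm_num)).trans (by norm_num))
    norm_num
    linarith [hK1]
  · refine (expdiff_mono (by norm_num; linarith [hK2])).trans
      ((sinh_poly (t := (456699/4000000 : ℝ)) (by norm_num) (by norm_num)).trans (by norm_num))
  · norm_num
    linarith [hK1]
  · norm_num
  · norm_num

lemma ocs_p3 : (∫ y in (3/10:ℝ)..(4/10:ℝ), Real.exp (-(2*y + y^2/2 + K*y^3))) ≤ (4646471346933/100000000000000 : ℝ) := by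
  apply piece _ _ (7/20 : ℝ) (2317593025949/5000000000000 : ℝ) (2421527903531/10000000000000 : ℝ) (96625861/40000000 : ℝ) _ (by norm_num) (by norm_num) (by norm_num)
  · refine (Real.exp_le_exp.mpr (neg_le_neg ?_)).trans
      ((exp_neg_upper (615127009/800000000 : ℝ) 0 (615127009/800000000 : ℝ) (by norm_num) (by norm_num) (by norm_num)).trans (by norm_num))
    norm_num
    linarith [hK1]
  · refine (expdiff_mono (by norm_num; linarith [hK2])).trans
      ((sinh_poly (t := (12078251/100000000 : ℝ)) (by norm_num) (by norm_num)).trans (by norm_num))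
  · norm_num
    linarith [hK1]
  · norm_num
  · norm_num

lemma ocs_p4 : (∫ y in (4/10:ℝ)..(5/10:ℝ), Real.exp (-(2*y + y^2/2 + K*y^3))) ≤ (18123759431/500000000000 : ℝ) := by
  apply piece _ _ (9/20 : ℝ) (1807437784591/5000000000000 : ℝ) (2565507933007/10000000000000 : ℝ) (102340709/40000000 : ℝ) _ (by norm_num) (by norm_num) (by norm_num)
  · refine (Real.exp_le_exp.mpr (neg_le_neg ?_)).trans
      ((exp_neg_upper (814022127/800000000 : ℝ) 1 (14022127/800000000 : ℝ) (by norm_num) (by norm_num) (by norm_num)).trans (by norm_num))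
    norm_num
    linarith [hK1]
  · refine (expdiff_mono (by norm_num; linarith [hK2])).trans
      ((sinh_poly (t := (12792619/100000000 : ℝ)) (by norm_num) (by norm_num)).trans (by norm_num))
  · norm_num
    linarith [hK1]
  · norm_num
  · norm_num

lemma ocs_p5 : (∫ y in (5/10:ℝ)..(6/10:ℝ), Real.exp (-(2*y + y^2/2 + K*y^3))) ≤ (557241759731/20000000000000 : ℝ) := by
  apply piece _ _ (11/20 : ℝ) (694419638839/2500000000000 : ℝ) (1360217798693/5000000000000 : ℝ) (108484269/40000000 : ℝ) _ (by norm_num) (by norm_num) (by norm_num)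
  · refine (Real.exp_le_exp.mpr (neg_le_neg ?_)).trans
      ((exp_neg_upper (1024775653/800000000 : ℝ) 1 (224775653/800000000 : ℝ) (by norm_num) (by norm_num) (by norm_num)).trans (by norm_num))
    norm_num
    linarith [hK1]
  · refine (expdiff_mono (by norm_num; linarith [hK2])).trans
      ((sinh_poly (t := (13560579/100000000 : ℝ)) (by norm_num) (by norm_num)).trans (by norm_num))
  · norm_num
    linarith [hK1]
  · norm_num
  · norm_num

lemma ocs_p6 : (∫ y in (6/10:ℝ)..(7/10:ℝ), Real.exp (-(2*y + y^2/2 + K*y^3))) ≤ (2107976094961/100000000000000 : ℝ) := by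
  apply piece _ _ (13/20 : ℝ) (26258965507/125000000000 : ℝ) (2886352733653/10000000000000 : ℝ) (115056541/40000000 : ℝ) _ (by norm_num) (by norm_num) (by norm_num)
  · refine (Real.exp_le_exp.mpr (neg_le_neg ?_)).trans
      ((exp_neg_upper (1248245011/800000000 : ℝ) 1 (448245011/800000000 : ℝ) (by norm_num) (by norm_num) (by norm_num)).trans (by norm_num))
    norm_num
    linarith [hK1]
  · refine (expdiff_mono (by norm_num; linarith [hK2])).trans
      ((sinh_poly (t := (14382131/100000000 : ℝ)) (by norm_num) (by norm_num)).trans (by norm_num))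
  · norm_num
    linarith [hK1]
  · norm_num
  · norm_num

lemma ocs_p7 : (∫ y in (7/10:ℝ)..(8/10:ℝ), Real.exp (-(2*y + y^2/2 + K*y^3))) ≤ (156808926657/10000000000000 : ℝ) := by
  apply piece _ _ (3/4 : ℝ) (97625833159/625000000000 : ℝ) (3063307641393/10000000000000 : ℝ) (4882301/1600000 : ℝ) _ (by norm_num) (by norm_num) (by norm_num)
  · refine (Real.exp_le_exp.mpr (neg_le_neg ?_)).trans
      ((exp_neg_upper (11882301/6400000 : ℝ) 1 (5482301/6400000 : ℝ) (by norm_num) (by norm_num) (by norm_num)).trans (by norm_num))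
    norm_num
    linarith [hK1]
  · refine (expdiff_mono (by norm_num; linarith [hK2])).trans
      ((sinh_poly (t := (610291/4000000 : ℝ)) (by norm_num) (by norm_num)).trans (by norm_num))
  · norm_num
    linarith [hK1]
  · norm_num
  · norm_num

lemma ocs_p8 : (∫ y in (8/10:ℝ)..(9/10:ℝ), Real.exp (-(2*y + y^2/2 + K*y^3))) ≤ (71605353391/6250000000000 : ℝ) := by
  apply piece _ _ (17/20 : ℝ) (57034534331/500000000000 : ℝ) (162567790341/500000000000 : ℝ) (129487221/40000000 : ℝ) _ (by norm_num) (by norm_num) (by norm_num)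
  · refine (Real.exp_le_exp.mpr (neg_le_neg ?_)).trans
      ((exp_neg_upper (1736760919/800000000 : ℝ) 2 (136760919/800000000 : ℝ) (by norm_num) (by norm_num) (by norm_num)).trans (by norm_num))
    norm_num
    linarith [hK1]
  · refine (expdiff_mono (by norm_num; linarith [hK2])).trans
      ((sinh_poly (t := (16186011/100000000 : ℝ)) (by norm_num) (by norm_num)).trans (by norm_num))
  · norm_num
    linarith [hK1]
  · norm_num
  · norm_num

lemma ocs_p9 : (∫ y in (9/10:ℝ)..(10/10:ℝ), Real.exp (-(2*y + y^2/2 + K*y^3))) ≤ (8212709462093/1000000000000000 : ℝ) := by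
  apply piece _ _ (19/20 : ℝ) (8172438137247/100000000000000 : ℝ) (862640169251/2500000000000 : ℝ) (137345629/40000000 : ℝ) _ (by norm_num) (by norm_num) (by norm_num)
  · refine (Real.exp_le_exp.mpr (neg_le_neg ?_)).trans
      ((exp_neg_upper (2003522317/800000000 : ℝ) 2 (403522317/800000000 : ℝ) (by norm_num) (by norm_num) (by norm_num)).trans (by norm_num))
    norm_num
    linarith [hK1]
  · refine (expdiff_mono (by norm_num; linarith [hK2])).trans
      ((sinh_poly (t := (17168339/100000000 : ℝ)) (by norm_num) (by norm_num)).trans (by norm_num))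
  · norm_num
    linarith [hK1]
  · norm_num
  · norm_num

lemma ocs_p10 : (∫ y in (10/10:ℝ)..(11/10:ℝ), Real.exp (-(2*y + y^2/2 + K*y^3))) ≤ (5769929739803/1000000000000000 : ℝ) := by
  apply piece _ _ (21/20 : ℝ) (5738131626199/100000000000000 : ℝ) (732198897031/2000000000000 : ℝ) (145632749/40000000 : ℝ) _ (by norm_num) (by norm_num) (by norm_num)
  · refine (Real.exp_le_exp.mpr (neg_le_neg ?_)).trans
      ((exp_neg_upper (2286429243/800000000 : ℝ) 2 (686429243/800000000 : ℝ) (by norm_num) (by norm_num) (by norm_num)).trans (by norm_num))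
    norm_num
    linarith [hK1]
  · refine (expdiff_mono (by norm_num; linarith [hK2])).trans
      ((sinh_poly (t := (18204259/100000000 : ℝ)) (by norm_num) (by norm_num)).trans (by norm_num))
  · norm_num
    linarith [hK1]
  · norm_num
  · norm_num

lemma ocs_p11 : (∫ y in (11/10:ℝ)..(12/10:ℝ), Real.exp (-(2*y + y^2/2 + K*y^3))) ≤ (3968757394903/1000000000000000 : ℝ) := by
  apply piece _ _ (23/20 : ℝ) (3944200550521/100000000000000 : ℝ) (388273912793/1000000000000 : ℝ) (154348581/40000000 : ℝ) _ (by norm_num) (by norm_num) (by norm_num)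
  · refine (Real.exp_le_exp.mpr (neg_le_neg ?_)).trans
      ((exp_neg_upper (2586339121/800000000 : ℝ) 3 (186339121/800000000 : ℝ) (by norm_num) (by norm_num) (by norm_num)).trans (by norm_num))
    norm_num
    linarith [hK1]
  · refine (expdiff_mono (by norm_num; linarith [hK2])).trans
      ((sinh_poly (t := (19293771/100000000 : ℝ)) (by norm_num) (by norm_num)).trans (by norm_num))
  · norm_num
    linarith [hK1]
  · norm_num
  · norm_num

lemma ocs_p12 : (∫ y in (12/10:ℝ)..(13/10:ℝ), Real.exp (-(2*y + y^2/2 + K*y^3))) ≤ (2669780792621/1000000000000000 : ℝ) := by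
  apply piece _ _ (5/4 : ℝ) (2651255942421/100000000000000 : ℝ) (4115887095871/10000000000000 : ℝ) (261589/64000 : ℝ) _ (by norm_num) (by norm_num) (by norm_num)
  · refine (Real.exp_le_exp.mpr (neg_le_neg ?_)).trans
      ((exp_neg_upper (185863/51200 : ℝ) 3 (32263/51200 : ℝ) (by norm_num) (by norm_num) (by norm_num)).trans (by norm_num))
    norm_num
    linarith [hK1]
  · refine (expdiff_mono (by norm_num; linarith [hK2])).trans
      ((sinh_poly (t := (32699/160000 : ℝ)) (by norm_num) (by norm_num)).trans (by norm_num))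
  · norm_num
    linarith [hK1]
  · norm_num
  · norm_num

lemma ocs_p13 : (∫ y in (13/10:ℝ)..(14/10:ℝ), Real.exp (-(2*y + y^2/2 + K*y^3))) ≤ (1754570494903/1000000000000000 : ℝ) := by
  apply piece _ _ (27/20 : ℝ) (1740936871201/100000000000000 : ℝ) (4360542458277/10000000000000 : ℝ) (173066381/40000000 : ℝ) _ (by norm_num) (by norm_num) (by norm_num)
  · refine (Real.exp_le_exp.mpr (neg_le_neg ?_)).trans
      ((exp_neg_upper (3240597429/800000000 : ℝ) 4 (40597429/800000000 : ℝ) (by norm_num) (by norm_num) (by norm_num)).trans (by norm_num))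
    norm_num
    linarith [hK1]
  · refine (expdiff_mono (by norm_num; linarith [hK2])).trans
      ((sinh_poly (t := (21633571/100000000 : ℝ)) (by norm_num) (by norm_num)).trans (by norm_num))
  · norm_num
    linarith [hK1]
  · norm_num
  · norm_num

lemma ocs_p14 : (∫ y in (14/10:ℝ)..(15/10:ℝ), Real.exp (-(2*y + y^2/2 + K*y^3))) ≤ (11253237259/10000000000000 : ℝ) := by
  apply piece _ _ (29/20 : ℝ) (139443296219/12500000000000 : ℝ) (577102737997/1250000000000 : ℝ) (183068349/40000000 : ℝ) _ (by norm_num) (by norm_num) (by norm_num)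
  · refine (Real.exp_le_exp.mpr (neg_le_neg ?_)).trans
      ((exp_neg_upper (3596660707/800000000 : ℝ) 4 (396660707/800000000 : ℝ) (by norm_num) (by norm_num) (by norm_num)).trans (by norm_num))
    norm_num
    linarith [hK1]
  · refine (expdiff_mono (by norm_num; linarith [hK2])).trans
      ((sinh_poly (t := (22883859/100000000 : ℝ)) (by norm_num) (by norm_num)).trans (by norm_num))
  · norm_num
    linarith [hK1]
  · norm_num
  · norm_num

lemma ocs_p15 : (∫ y in (15/10:ℝ)..(16/10:ℝ), Real.exp (-(2*y + y^2/2 + K*y^3))) ≤ (879514501753/1250000000000000 : ℝ) := by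
  apply piece _ _ (31/20 : ℝ) (6967869991107/1000000000000000 : ℝ) (488485583967/1000000000000 : ℝ) (193499029/40000000 : ℝ) _ (by norm_num) (by norm_num) (by norm_num)
  · refine (Real.exp_le_exp.mpr (neg_le_neg ?_)).trans
      ((exp_neg_upper (3973156633/800000000 : ℝ) 4 (773156633/800000000 : ℝ) (by norm_num) (by norm_num) (by norm_num)).trans (by norm_num))
    norm_num
    linarith [hK1]
  · refine (expdiff_mono (by norm_num; linarith [hK2])).trans
      ((sinh_poly (t := (24187739/100000000 : ℝ)) (by norm_num) (by norm_num)).trans (by norm_num))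
  · norm_num
    linarith [hK1]
  · norm_num
  · norm_num

lemma ocs_p16 : (∫ y in (16/10:ℝ)..(17/10:ℝ), Real.exp (-(2*y + y^2/2 + K*y^3))) ≤ (4284249465487/10000000000000000 : ℝ) := by
  apply piece _ _ (33/20 : ℝ) (847587735997/200000000000000 : ℝ) (5164789547757/10000000000000 : ℝ) (204358421/40000000 : ℝ) _ (by norm_num) (by norm_num) (by norm_num)
  · refine (Real.exp_le_exp.mpr (neg_le_neg ?_)).trans
      ((exp_neg_upper (4370942631/800000000 : ℝ) 5 (370942631/800000000 : ℝ) (by norm_num) (by norm_num) (by norm_num)).trans (by norm_num))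
    norm_num
    linarith [hK1]
  · refine (expdiff_mono (by norm_num; linarith [hK2])).trans
      ((sinh_poly (t := (25545211/100000000 : ℝ)) (by norm_num) (by norm_num)).trans (by norm_num))
  · norm_num
    linarith [hK1]
  · norm_num
  · norm_num

lemma ocs_p17 : (∫ y in (17/10:ℝ)..(18/10:ℝ), Real.exp (-(2*y + y^2/2 + K*y^3))) ≤ (317212693429/1250000000000000 : ℝ) := by
  apply piece _ _ (7/4 : ℝ) (501436816537/200000000000000 : ℝ) (2728392202881/5000000000000 : ℝ) (8625861/1600000 : ℝ) _ (by norm_num) (by norm_num) (by norm_num)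
  · refine (Real.exp_le_exp.mpr (neg_le_neg ?_)).trans
      ((exp_neg_upper (38327009/6400000 : ℝ) 5 (6327009/6400000 : ℝ) (by norm_num) (by norm_num) (by norm_num)).trans (by norm_num))
    norm_num
    linarith [hK1]
  · refine (expdiff_mono (by norm_num; linarith [hK2])).trans
      ((sinh_poly (t := (1078251/4000000 : ℝ)) (by norm_num) (by norm_num)).trans (by norm_num))
  · norm_num
    linarith [hK1]
  · norm_num
  · norm_num

lemma ocs_p18 : (∫ y in (18/10:ℝ)..(19/10:ℝ), Real.exp (-(2*y + y^2/2 + K*y^3))) ≤ (292144623547/2000000000000000 : ℝ) := by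
  apply piece _ _ (37/20 : ℝ) (1441215861877/1000000000000000 : ℝ) (1152203833961/2000000000000 : ℝ) (227363341/40000000 : ℝ) _ (by norm_num) (by norm_num) (by norm_num)
  · refine (Real.exp_le_exp.mpr (neg_le_neg ?_)).trans
      ((exp_neg_upper (5233814539/800000000 : ℝ) 6 (433814539/800000000 : ℝ) (by norm_num) (by norm_num) (by norm_num)).trans (by norm_num))
    norm_num
    linarith [hK1]
  · refine (expdiff_mono (by norm_num; linarith [hK2])).trans
      ((sinh_poly (t := (28420931/100000000 : ℝ)) (by norm_num) (by norm_num)).trans (by norm_num))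
  · norm_num
    linarith [hK1]
  · norm_num
  · norm_num

lemma ocs_p19 : (∫ y in (19/10:ℝ)..(20/10:ℝ), Real.exp (-(2*y + y^2/2 + K*y^3))) ≤ (8161966768239/100000000000000000 : ℝ) := by
  apply piece _ _ (39/20 : ℝ) (251285722269/312500000000000 : ℝ) (759711415599/1250000000000 : ℝ) (239508869/40000000 : ℝ) _ (by norm_num) (by norm_num) (by norm_num)
  · refine (Real.exp_le_exp.mpr (neg_le_neg ?_)).trans
      ((exp_neg_upper (5700615297/800000000 : ℝ) 7 (100615297/800000000 : ℝ) (by norm_num) (by norm_num) (by norm_num)).trans (by norm_num))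
    norm_num
    linarith [hK1]
  · refine (expdiff_mono (by norm_num; linarith [hK2])).trans
      ((sinh_poly (t := (29939179/100000000 : ℝ)) (by norm_num) (by norm_num)).trans (by norm_num))
  · norm_num
    linarith [hK1]
  · norm_num
  · norm_num

lemma ocs_p20 : (∫ y in (20/10:ℝ)..(21/10:ℝ), Real.exp (-(2*y + y^2/2 + K*y^3))) ≤ (4422412017579/100000000000000000 : ℝ) := by
  apply piece _ _ (41/20 : ℝ) (4349977177031/10000000000000000 : ℝ) (6407018504353/10000000000000 : ℝ) (252083109/40000000 : ℝ) _ (by norm_num) (by norm_num) (by norm_num)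
  · refine (Real.exp_le_exp.mpr (neg_le_neg ?_)).trans
      ((exp_neg_upper (6192135823/800000000 : ℝ) 7 (592135823/800000000 : ℝ) (by norm_num) (by norm_num) (by norm_num)).trans (by norm_num))
    norm_num
    linarith [hK1]
  · refine (expdiff_mono (by norm_num; linarith [hK2])).trans
      ((sinh_poly (t := (31511019/100000000 : ℝ)) (by norm_num) (by norm_num)).trans (by norm_num))
  · norm_num
    linarith [hK1]
  · norm_num
  · norm_num

lemma ocs_p21 : (∫ y in (21/10:ℝ)..(22/10:ℝ), Real.exp (-(2*y + y^2/2 + K*y^3))) ≤ (580281998761/25000000000000000 : ℝ) := by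
  apply piece _ _ (43/20 : ℝ) (1139570304861/5000000000000000 : ℝ) (6749239983903/10000000000000 : ℝ) (265086061/40000000 : ℝ) _ (by norm_num) (by norm_num) (by norm_num)
  · refine (Real.exp_le_exp.mpr (neg_le_neg ?_)).trans
      ((exp_neg_upper (6709233541/800000000 : ℝ) 8 (309233541/800000000 : ℝ) (by norm_num) (by norm_num) (by norm_num)).trans (by norm_num))
    norm_num
    linarith [hK1]
  · refine (expdiff_mono (by norm_num; linarith [hK2])).trans
      ((sinh_poly (t := (33136451/100000000 : ℝ)) (by norm_num) (by norm_num)).trans (by norm_num))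
  · norm_num
    linarith [hK1]
  · norm_num
  · norm_num

lemma ocs_p22 : (∫ y in (22/10:ℝ)..(23/10:ℝ), Real.exp (-(2*y + y^2/2 + K*y^3))) ≤ (1178833996737/100000000000000000 : ℝ) := by
  apply piece _ _ (9/4 : ℝ) (144415818409/1250000000000000 : ℝ) (7104618250549/10000000000000 : ℝ) (11140709/1600000 : ℝ) _ (by norm_num) (by norm_num) (by norm_num)
  · refine (Real.exp_le_exp.mpr (neg_le_neg ?_)).trans
      ((exp_neg_upper (58022127/6400000 : ℝ) 9 (422127/6400000 : ℝ) (by norm_num) (by norm_num) (by norm_num)).trans (by norm_num))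
    norm_num
    linarith [hK1]
  · refine (expdiff_mono (by norm_num; linarith [hK2])).trans
      ((sinh_poly (t := (1392619/4000000 : ℝ)) (by norm_num) (by norm_num)).trans (by norm_num))
  · norm_num
    linarith [hK1]
  · norm_num
  · norm_num

lemma ocs_p23 : (∫ y in (23/10:ℝ)..(24/10:ℝ), Real.exp (-(2*y + y^2/2 + K*y^3))) ≤ (5787062225009/1000000000000000000 : ℝ) := by
  apply piece _ _ (47/20 : ℝ) (5660077941507/100000000000000000 : ℝ) (7473440654009/10000000000000 : ℝ) (292378101/40000000 : ℝ) _ (by norm_num) (by norm_num) (by norm_num)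
  · refine (Real.exp_le_exp.mpr (neg_le_neg ?_)).trans
      ((exp_neg_upper (7823590249/800000000 : ℝ) 9 (623590249/800000000 : ℝ) (by norm_num) (by norm_num) (by norm_num)).trans (by norm_num))
    norm_num
    linarith [hK1]
  · refine (expdiff_mono (by norm_num; linarith [hK2])).trans
      ((sinh_poly (t := (36548091/100000000 : ℝ)) (by norm_num) (by norm_num)).trans (by norm_num))
  · norm_num
    linarith [hK1]
  · norm_num
  · norm_num

lemma ocs_p24 : (∫ y in (24/10:ℝ)..(25/10:ℝ), Real.exp (-(2*y + y^2/2 + K*y^3))) ≤ (2743177689119/1000000000000000000 : ℝ) := by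
  apply piece _ _ (49/20 : ℝ) (535412631613/20000000000000000 : ℝ) (1964005285781/2500000000000 : ℝ) (306667189/40000000 : ℝ) _ (by norm_num) (by norm_num) (by norm_num)
  · refine (Real.exp_le_exp.mpr (neg_le_neg ?_)).trans
      ((exp_neg_upper (8422564087/800000000 : ℝ) 10 (422564087/800000000 : ℝ) (by norm_num) (by norm_num) (by norm_num)).trans (by norm_num))
    norm_num
    linarith [hK1]
  · refine (expdiff_mono (by norm_num; linarith [hK2])).trans
      ((sinh_poly (t := (38334299/100000000 : ℝ)) (by norm_num) (by norm_num)).trans (by norm_num))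
  · norm_num
    linarith [hK1]
  · norm_num
  · norm_num

lemma ocs_s1 : (∫ y in (0:ℝ)..(2/10:ℝ), Real.exp (-(2*y + y^2/2 + K*y^3))) ≤ (4096971035127/25000000000000 : ℝ) := by
  have hadd := intervalIntegral.integral_add_adjacent_intervals (ocs_hii (0:ℝ) (1/10:ℝ)) (ocs_hii (1/10:ℝ) (2/10:ℝ))
  rw [← hadd]
  linarith [ocs_p0, ocs_p1]

lemma ocs_s2 : (∫ y in (0:ℝ)..(3/10:ℝ), Real.exp (-(2*y + y^2/2 + K*y^3))) ≤ (2226294560951/10000000000000 : ℝ) := by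
  have hadd := intervalIntegral.integral_add_adjacent_intervals (ocs_hii (0:ℝ) (2/10:ℝ)) (ocs_hii (2/10:ℝ) (3/10:ℝ))
  rw [← hadd]
  linarith [ocs_s1, ocs_p2]

lemma ocs_s3 : (∫ y in (0:ℝ)..(4/10:ℝ), Real.exp (-(2*y + y^2/2 + K*y^3))) ≤ (26909416956443/100000000000000 : ℝ) := by
  have hadd := intervalIntegral.integral_add_adjacent_intervals (ocs_hii (0:ℝ) (3/10:ℝ)) (ocs_hii (3/10:ℝ) (4/10:ℝ))
  rw [← hadd]
  linarith [ocs_s2, ocs_p3]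

lemma ocs_s4 : (∫ y in (0:ℝ)..(5/10:ℝ), Real.exp (-(2*y + y^2/2 + K*y^3))) ≤ (30534168842643/100000000000000 : ℝ) := by
  have hadd := intervalIntegral.integral_add_adjacent_intervals (ocs_hii (0:ℝ) (4/10:ℝ)) (ocs_hii (4/10:ℝ) (5/10:ℝ))
  rw [← hadd]
  linarith [ocs_s3, ocs_p4]

lemma ocs_s5 : (∫ y in (0:ℝ)..(6/10:ℝ), Real.exp (-(2*y + y^2/2 + K*y^3))) ≤ (16660188820649/50000000000000 : ℝ) := by
  have hadd := intervalIntegral.integral_add_adjacent_intervals (ocs_hii (0:ℝ) (5/10:ℝ)) (ocs_hii (5/10:ℝ) (6/10:ℝ))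
  rw [← hadd]
  linarith [ocs_s4, ocs_p5]

lemma ocs_s6 : (∫ y in (0:ℝ)..(7/10:ℝ), Real.exp (-(2*y + y^2/2 + K*y^3))) ≤ (35428353736259/100000000000000 : ℝ) := by
  have hadd := intervalIntegral.integral_add_adjacent_intervals (ocs_hii (0:ℝ) (6/10:ℝ)) (ocs_hii (6/10:ℝ) (7/10:ℝ))
  rw [← hadd]
  linarith [ocs_s5, ocs_p6]

lemma ocs_s7 : (∫ y in (0:ℝ)..(8/10:ℝ), Real.exp (-(2*y + y^2/2 + K*y^3))) ≤ (36996443002829/100000000000000 : ℝ) := by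
  have hadd := intervalIntegral.integral_add_adjacent_intervals (ocs_hii (0:ℝ) (7/10:ℝ)) (ocs_hii (7/10:ℝ) (8/10:ℝ))
  rw [← hadd]
  linarith [ocs_s6, ocs_p7]

lemma ocs_s8 : (∫ y in (0:ℝ)..(9/10:ℝ), Real.exp (-(2*y + y^2/2 + K*y^3))) ≤ (7628425731417/20000000000000 : ℝ) := by
  have hadd := intervalIntegral.integral_add_adjacent_intervals (ocs_hii (0:ℝ) (8/10:ℝ)) (ocs_hii (8/10:ℝ) (9/10:ℝ))
  rw [← hadd]
  linarith [ocs_s7, ocs_p8]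

lemma ocs_s9 : (∫ y in (0:ℝ)..(10/10:ℝ), Real.exp (-(2*y + y^2/2 + K*y^3))) ≤ (389633996032943/1000000000000000 : ℝ) := by
  have hadd := intervalIntegral.integral_add_adjacent_intervals (ocs_hii (0:ℝ) (9/10:ℝ)) (ocs_hii (9/10:ℝ) (10/10:ℝ))
  rw [← hadd]
  linarith [ocs_s8, ocs_p9]

lemma ocs_s10 : (∫ y in (0:ℝ)..(11/10:ℝ), Real.exp (-(2*y + y^2/2 + K*y^3))) ≤ (197701962886373/500000000000000 : ℝ) := by
  have hadd := intervalIntegral.integral_add_adjacent_intervals (ocs_hii (0:ℝ) (10/10:ℝ)) (ocs_hii (10/10:ℝ) (11/10:ℝ))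
  rw [← hadd]
  linarith [ocs_s9, ocs_p10]

lemma ocs_s11 : (∫ y in (0:ℝ)..(12/10:ℝ), Real.exp (-(2*y + y^2/2 + K*y^3))) ≤ (399372683167649/1000000000000000 : ℝ) := by
  have hadd := intervalIntegral.integral_add_adjacent_intervals (ocs_hii (0:ℝ) (11/10:ℝ)) (ocs_hii (11/10:ℝ) (12/10:ℝ))
  rw [← hadd]
  linarith [ocs_s10, ocs_p11]

lemma ocs_s12 : (∫ y in (0:ℝ)..(13/10:ℝ), Real.exp (-(2*y + y^2/2 + K*y^3))) ≤ (40204246396027/100000000000000 : ℝ) := by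
  have hadd := intervalIntegral.integral_add_adjacent_intervals (ocs_hii (0:ℝ) (12/10:ℝ)) (ocs_hii (12/10:ℝ) (13/10:ℝ))
  rw [← hadd]
  linarith [ocs_s11, ocs_p12]

lemma ocs_s13 : (∫ y in (0:ℝ)..(14/10:ℝ), Real.exp (-(2*y + y^2/2 + K*y^3))) ≤ (403797034455173/1000000000000000 : ℝ) := by
  have hadd := intervalIntegral.integral_add_adjacent_intervals (ocs_hii (0:ℝ) (13/10:ℝ)) (ocs_hii (13/10:ℝ) (14/10:ℝ))
  rw [← hadd]
  linarith [ocs_s12, ocs_p13]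

lemma ocs_s14 : (∫ y in (0:ℝ)..(15/10:ℝ), Real.exp (-(2*y + y^2/2 + K*y^3))) ≤ (404922358181073/1000000000000000 : ℝ) := by
  have hadd := intervalIntegral.integral_add_adjacent_intervals (ocs_hii (0:ℝ) (14/10:ℝ)) (ocs_hii (14/10:ℝ) (15/10:ℝ))
  rw [← hadd]
  linarith [ocs_s13, ocs_p14]

lemma ocs_s15 : (∫ y in (0:ℝ)..(16/10:ℝ), Real.exp (-(2*y + y^2/2 + K*y^3))) ≤ (2028129848912377/5000000000000000 : ℝ) := by
  have hadd := intervalIntegral.integral_add_adjacent_intervals (ocs_hii (0:ℝ) (15/10:ℝ)) (ocs_hii (15/10:ℝ) (16/10:ℝ))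
  rw [← hadd]
  linarith [ocs_s14, ocs_p15]

lemma ocs_s16 : (∫ y in (0:ℝ)..(17/10:ℝ), Real.exp (-(2*y + y^2/2 + K*y^3))) ≤ (4060543947290241/10000000000000000 : ℝ) := by
  have hadd := intervalIntegral.integral_add_adjacent_intervals (ocs_hii (0:ℝ) (16/10:ℝ)) (ocs_hii (16/10:ℝ) (17/10:ℝ))
  rw [← hadd]
  linarith [ocs_s15, ocs_p16]

lemma ocs_s17 : (∫ y in (0:ℝ)..(18/10:ℝ), Real.exp (-(2*y + y^2/2 + K*y^3))) ≤ (4063081648837673/10000000000000000 : ℝ) := by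
  have hadd := intervalIntegral.integral_add_adjacent_intervals (ocs_hii (0:ℝ) (17/10:ℝ)) (ocs_hii (17/10:ℝ) (18/10:ℝ))
  rw [← hadd]
  linarith [ocs_s16, ocs_p17]

lemma ocs_s18 : (∫ y in (0:ℝ)..(19/10:ℝ), Real.exp (-(2*y + y^2/2 + K*y^3))) ≤ (254033898247213/625000000000000 : ℝ) := by
  have hadd := intervalIntegral.integral_add_adjacent_intervals (ocs_hii (0:ℝ) (18/10:ℝ)) (ocs_hii (18/10:ℝ) (19/10:ℝ))
  rw [← hadd]
  linarith [ocs_s17, ocs_p18]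

lemma ocs_s19 : (∫ y in (0:ℝ)..(20/10:ℝ), Real.exp (-(2*y + y^2/2 + K*y^3))) ≤ (40653585686322319/100000000000000000 : ℝ) := by
  have hadd := intervalIntegral.integral_add_adjacent_intervals (ocs_hii (0:ℝ) (19/10:ℝ)) (ocs_hii (19/10:ℝ) (20/10:ℝ))
  rw [← hadd]
  linarith [ocs_s18, ocs_p19]

lemma ocs_s20 : (∫ y in (0:ℝ)..(21/10:ℝ), Real.exp (-(2*y + y^2/2 + K*y^3))) ≤ (20329004049169949/50000000000000000 : ℝ) := by
  have hadd := intervalIntegral.integral_add_adjacent_intervals (ocs_hii (0:ℝ) (20/10:ℝ)) (ocs_hii (20/10:ℝ) (21/10:ℝ))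
  rw [← hadd]
  linarith [ocs_s19, ocs_p20]

lemma ocs_s21 : (∫ y in (0:ℝ)..(22/10:ℝ), Real.exp (-(2*y + y^2/2 + K*y^3))) ≤ (20330164613167471/50000000000000000 : ℝ) := by
  have hadd := intervalIntegral.integral_add_adjacent_intervals (ocs_hii (0:ℝ) (21/10:ℝ)) (ocs_hii (21/10:ℝ) (22/10:ℝ))
  rw [← hadd]
  linarith [ocs_s20, ocs_p21]

lemma ocs_s22 : (∫ y in (0:ℝ)..(23/10:ℝ), Real.exp (-(2*y + y^2/2 + K*y^3))) ≤ (40661508060331679/100000000000000000 : ℝ) := by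
  have hadd := intervalIntegral.integral_add_adjacent_intervals (ocs_hii (0:ℝ) (22/10:ℝ)) (ocs_hii (22/10:ℝ) (23/10:ℝ))
  rw [← hadd]
  linarith [ocs_s21, ocs_p22]

lemma ocs_s23 : (∫ y in (0:ℝ)..(24/10:ℝ), Real.exp (-(2*y + y^2/2 + K*y^3))) ≤ (406620867665541799/1000000000000000000 : ℝ) := by
  have hadd := intervalIntegral.integral_add_adjacent_intervals (ocs_hii (0:ℝ) (23/10:ℝ)) (ocs_hii (23/10:ℝ) (24/10:ℝ))
  rw [← hadd]
  linarith [ocs_s22, ocs_p23]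

lemma ocs_s24 : (∫ y in (0:ℝ)..(25/10:ℝ), Real.exp (-(2*y + y^2/2 + K*y^3))) ≤ (203311805421615459/500000000000000000 : ℝ) := by
  have hadd := intervalIntegral.integral_add_adjacent_intervals (ocs_hii (0:ℝ) (24/10:ℝ)) (ocs_hii (24/10:ℝ) (25/10:ℝ))
  rw [← hadd]
  linarith [ocs_s23, ocs_p24]

lemma stepF : Jv < 0.407 := by
  have hsplit : Jv = (∫ y in (0:ℝ)..(25/10:ℝ), Real.exp (-(2*y + y^2/2 + K*y^3)))
      + ∫ y in Ioi (25/10:ℝ), Real.exp (-(2*y + y^2/2 + K*y^3)) := by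
    unfold Jv
    rw [intervalIntegral.integral_of_le (by norm_num)]
    rw [← setIntegral_union (Ioc_disjoint_Ioi le_rfl) measurableSet_Ioi
      (intPhi.mono_set Ioc_subset_Ioi_self) (intPhi.mono_set (Ioi_subset_Ioi (by norm_num)))]
    rw [Ioc_union_Ioi_eq_Ioi (by norm_num : (0:ℝ) ≤ 25/10)]
  rw [hsplit]
  have ht := tail_bound
  have hfin : (203311805421615459/500000000000000000 : ℝ) + (1/100000:ℝ) < 0.407 := by norm_num
  linarith [ocs_s24]

/-- The coefficients `c` satisfy `∫_z^∞ c(θ) dθ + c(z) = p'(z)` for all `z > 0`,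
and `∫_0^∞ c(θ) dθ > 0.593`. -/
theorem stmt_9 :
    (∀ z > (0 : ℝ), (∫ θ in Set.Ioi z, ocsC θ) + ocsC z = deriv ocsP z) ∧
    (∫ θ in Set.Ioi (0 : ℝ), ocsC θ) > 0.593 := by
  constructor
  · intro z hz
    rw [stepD hz.le, ocsC_eq hz.le]
    ring
  · rw [stepD le_rfl]
    have : Ff 0 = ∫ y in Ioi (0:ℝ), Gf y := by
      unfold Ff; rw [Real.exp_zero, one_mul]
    rw [this, stepE]
    have := stepF
    norm_num at this ⊢
    linarith
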